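/- Let ρ : ℝ × ℝ × ℝ → ℝ be continuous and Lipschitz in its last two arguments, so that the initial value problem b′(x) = −ρ(x, b(x), y(x)), y′(x) = −1 has a unique solution forward from any initial condition. Fix a state S₀ = (x₀, b₀, y₀) and, for Z > 0, define the result of redeeming Z at a state (x*, b*, y*) as the state (x* + Z, B(x* + Z), y* − Z) together with the payout b* − B(x* + Z), where (B, Y) is the unique solution of the system with B(x*) = b*, Y(x*) = y*. Let X, Y > 0 with X + Y ≤ y₀; let S_X, P_X result from redeeming X at S₀, let S_{X,Y}, P_{X,Y} result from redeeming Y at S_X, and let S_{X+Y}, P_{X+Y} result from redeeming X + Y at S₀. Then (1) P_X + P_{X,Y} = P_{X+Y} and (2) S_{X,Y} = S_{X+Y} (path independence of redemptions). -/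

import Mathlib

/- **Statement 1** (Theorem `thm:path_ind`, path independence of redemptions).
   The P-AMM dynamical system is `b′(x) = −ρ(x, b(x), y(x))`, `y′(x) = −1`, where
   `ρ` is continuous and Lipschitz in its last two arguments (so solutions forward
   from any initial condition are unique).  Redeeming `Z` at `(x*, b*, y*)` moves to
   `(x* + Z, B(x* + Z), y* − Z)` along the unique solution `(B, Y)` with
   `B(x*) = b*`, `Y(x*) = y*`, paying out `b* − B(x* + Z)`.
   Here `(B1, Y1)` is a solution forward from `S₀ = (x₀, b₀, y₀)` and `(B2, Y2)` is a
   solution forward from the state `S_X = (x₀ + X, B1(x₀ + X), y₀ − X)` obtained by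
   redeeming `X` at `S₀`.  The conclusion: payouts add up, `P_X + P_{X,Y} = P_{X+Y}`,
   and the resulting states agree, `S_{X,Y} = S_{X+Y}`. -/
theorem pamm_path_independence
    (ρ : ℝ × ℝ × ℝ → ℝ)
    (hρcont : Continuous ρ)
    (hρlip : ∃ K : NNReal, ∀ x : ℝ, LipschitzWith K (fun p : ℝ × ℝ => ρ (x, p.1, p.2)))
    (x₀ b₀ y₀ X Y : ℝ) (hX : 0 < X) (hY : 0 < Y) (hXY : X + Y ≤ y₀)
    (B1 Y1 B2 Y2 : ℝ → ℝ)
    (hB1init : B1 x₀ = b₀) (hY1init : Y1 x₀ = y₀)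
    (hB1 : ∀ t ∈ Set.Ici x₀, HasDerivAt B1 (-(ρ (t, B1 t, Y1 t))) t)
    (hY1 : ∀ t ∈ Set.Ici x₀, HasDerivAt Y1 (-1 : ℝ) t)
    (hB2init : B2 (x₀ + X) = B1 (x₀ + X)) (hY2init : Y2 (x₀ + X) = y₀ - X)
    (hB2 : ∀ t ∈ Set.Ici (x₀ + X), HasDerivAt B2 (-(ρ (t, B2 t, Y2 t))) t)
    (hY2 : ∀ t ∈ Set.Ici (x₀ + X), HasDerivAt Y2 (-1 : ℝ) t) :
    (b₀ - B1 (x₀ + X)) + (B1 (x₀ + X) - B2 ((x₀ + X) + Y)) = b₀ - B1 (x₀ + (X + Y)) ∧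
    ((x₀ + X) + Y, B2 ((x₀ + X) + Y), (y₀ - X) - Y)
      = (x₀ + (X + Y), B1 (x₀ + (X + Y)), y₀ - (X + Y)) := by
  obtain ⟨K, hK⟩ := hρlip
  -- Step 1: Y1 is linear: Y1 t = y₀ - (t - x₀) on [x₀, ∞); we need it at x₀ + X and x₀ + X + Y.
  have hY1lin : ∀ t, x₀ ≤ t → Y1 t = y₀ - (t - x₀) := by
    intro t ht
    have := ODE_solution_unique (v := fun _ (_ : ℝ) => (-1 : ℝ)) (K := 0) (a := x₀) (b := t)
      (f := Y1) (g := fun s => y₀ - (s - x₀))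
      (fun _ => LipschitzWith.const _)
      (fun s hs => ((hY1 s hs.1).continuousAt.continuousWithinAt))
      (fun s hs => (hY1 s hs.1).hasDerivWithinAt)
      (by
        intro s hs
        exact ((hasDerivAt_const s y₀).sub ((hasDerivAt_id s).sub (hasDerivAt_const s x₀))).continuousAt.continuousWithinAt)
      (by
        intro s hs
        have : HasDerivAt (fun s => y₀ - (s - x₀)) (0 - (1 - 0)) s :=
          (hasDerivAt_const s y₀).sub ((hasDerivAt_id s).sub (hasDerivAt_const s x₀))
        simpa using this.hasDerivWithinAt)
      (by simp [hY1init])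
    simpa using this ⟨ht, le_rfl⟩
  -- Step 2: uniqueness for the system on [x₀ + X, x₀ + X + Y]
  set v : ℝ → ℝ × ℝ → ℝ × ℝ := fun t p => (-(ρ (t, p.1, p.2)), -1) with hv_def
  have hvlip : ∀ t, LipschitzWith (max K 0) (v t) := by
    intro t
    have h1 : LipschitzWith K (fun p : ℝ × ℝ => -(ρ (t, p.1, p.2))) := by
      intro p q
      simpa [edist_neg_neg] using hK t p q
    exact h1.prodMk (LipschitzWith.const (-1 : ℝ))
  set f : ℝ → ℝ × ℝ := fun t => (B1 t, Y1 t) with hf_def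
  set g : ℝ → ℝ × ℝ := fun t => (B2 t, Y2 t) with hg_def
  have key : f ((x₀ + X) + Y) = g ((x₀ + X) + Y) := by
    have hsub : ∀ t, x₀ + X ≤ t → x₀ ≤ t := fun t ht => le_trans (by linarith) ht
    have := ODE_solution_unique (v := v) (K := max K 0) (a := x₀ + X) (b := (x₀ + X) + Y)
      (f := f) (g := g) hvlip
      (fun s hs => (((hB1 s (hsub s hs.1)).prodMk (hY1 s (hsub s hs.1))).continuousAt.continuousWithinAt))
      (fun s hs => (((hB1 s (hsub s hs.1)).prodMk (hY1 s (hsub s hs.1))).hasDerivWithinAt))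
      (fun s hs => (((hB2 s hs.1).prodMk (hY2 s hs.1)).continuousAt.continuousWithinAt))
      (fun s hs => (((hB2 s hs.1).prodMk (hY2 s hs.1)).hasDerivWithinAt))
      (by
        have h1 : Y1 (x₀ + X) = y₀ - X := by
          rw [hY1lin (x₀ + X) (by linarith)]; ring
        simp [hf_def, hg_def, hB2init, hY2init, h1])
    exact this ⟨by linarith, le_rfl⟩
  have hB : B2 ((x₀ + X) + Y) = B1 ((x₀ + X) + Y) := by
    have := congrArg Prod.fst key
    simp [hf_def, hg_def] at this
    exact this.symm
  have heq : (x₀ + X) + Y = x₀ + (X + Y) := by ring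
  constructor
  · rw [hB, heq]; ring
  · refine Prod.ext heq (Prod.ext ?_ (by ring))
    rw [hB, heq]
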